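/- With the notation of the previous context, if moreover the only weight-3 vectors in the column space of N are the columns of N themselves, then for x ≠ y in X, the images of e_x and e_y in V differ by the image of some e_z (i.e., x and y become adjacent in the Cayley graph Γ) if and only if {x, y, z} is a line of (X, L) for some z. Consequently the neighborhood of the identity vertex in Γ induces a graph isomorphic to the collinearity graph of (X, L), so Γ is locally Δ where Δ is the collinearity graph. -/

import Mathlib

open Finset

variable {X : Type*} [Fintype X] [DecidableEq X]

/-- Hamming weight of a vector in `F_2^X`. -/
def wtv (v : X → ZMod 2) : ℕ := (Finset.univ.filter fun x => v x ≠ 0).card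

/-- The column of the point-line incidence matrix corresponding to the line `ℓ`:
the characteristic vector of `ℓ` over `F_2`. -/
def lineVec (ℓ : Finset X) : X → ZMod 2 := fun x => if x ∈ ℓ then 1 else 0

/-- The column space over `F_2` of the point-line incidence matrix of `(X, L)`. -/
def colSpace (L : Finset (Finset X)) : Submodule (ZMod 2) (X → ZMod 2) :=
  Submodule.span (ZMod 2) {v | ∃ ℓ ∈ L, v = lineVec ℓ}
/-- The Cayley graph of `V = F_2^X / col(N)` with connection set the images of the
standard basis vectors `e_x`. -/
def cayleyGraph (L : Finset (Finset X)) :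
    SimpleGraph ((X → ZMod 2) ⧸ colSpace L) where
  Adj u v := u ≠ v ∧ ∃ x : X, v = u + (colSpace L).mkQ (Pi.single x 1)
  symm := by
    constructor
    rintro u v ⟨h, x, hx⟩
    refine ⟨h.symm, x, ?_⟩
    have he : (colSpace L).mkQ (Pi.single x 1) + (colSpace L).mkQ (Pi.single x 1) = 0 := by
      rw [← two_smul (ZMod 2)]
      have : (2 : ZMod 2) = 0 := by decide
      rw [this, zero_smul]
    rw [hx, add_assoc, he, add_zero]
  loopless := ⟨fun _ h => h.1 rfl⟩

/-- The collinearity graph of `(X, L)`: two points adjacent iff they lie on a common line. -/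
def collGraph (L : Finset (Finset X)) : SimpleGraph X where
  Adj x y := x ≠ y ∧ ∃ ℓ ∈ L, x ∈ ℓ ∧ y ∈ ℓ
  symm := ⟨fun _ _ ⟨h, ℓ, hℓ, hx, hy⟩ => ⟨h.symm, ℓ, hℓ, hy, hx⟩⟩
  loopless := ⟨fun _ h => h.1 rfl⟩

lemma negself (f : X → ZMod 2) : -f = f := by
  funext a
  simp only [Pi.neg_apply]
  generalize f a = b
  revert b
  decide

lemma addself (f : X → ZMod 2) : f + f = 0 := by
  funext a
  simp only [Pi.add_apply, Pi.zero_apply]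
  generalize f a = b
  revert b
  decide

lemma single_eq_lineVec (x : X) : Pi.single x (1 : ZMod 2) = lineVec ({x} : Finset X) := by
  funext w
  simp [lineVec, Pi.single_apply]

lemma single_add_lineVec {x : X} {s : Finset X} (hx : x ∉ s) :
    Pi.single x (1 : ZMod 2) + lineVec s = lineVec (insert x s) := by
  funext w
  simp only [Pi.add_apply, Pi.single_apply, lineVec, Finset.mem_insert]
  by_cases h : w = x
  · subst h; simp [hx]
  · simp [h]

lemma wtv_lineVec (s : Finset X) : wtv (lineVec s) = s.card := by
  unfold wtv
  congr 1
  ext w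
  simp [lineVec]

lemma lineVec_inj {s t : Finset X} (h : lineVec s = lineVec t) : s = t := by
  ext w
  have hw := congrFun h w
  simp only [lineVec] at hw
  by_cases hs : w ∈ s <;> by_cases ht : w ∈ t <;> simp_all

lemma triple_eq {x y z : X} (hxy : x ≠ y) (hxz : x ≠ z) (hyz : y ≠ z) :
    Pi.single x (1 : ZMod 2) + Pi.single y 1 + Pi.single z 1
      = lineVec ({x, y, z} : Finset X) := by
  rw [single_eq_lineVec z, add_assoc, single_add_lineVec (by simp [hyz]),
      single_add_lineVec (by simp [hxy, hxz])]

lemma pair_not_mem (L : Finset (Finset X)) (h2 : ∀ v ∈ colSpace L, wtv v ≠ 2)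
    {x y : X} (hxy : x ≠ y) :
    Pi.single x (1 : ZMod 2) + Pi.single y 1 ∉ colSpace L := by
  intro hmem
  have heq : Pi.single x (1 : ZMod 2) + Pi.single y 1 = lineVec ({x, y} : Finset X) := by
    rw [single_eq_lineVec y, single_add_lineVec (by simp [hxy])]
  rw [heq] at hmem
  have h := h2 _ hmem
  rw [wtv_lineVec] at h
  exact h (Finset.card_pair hxy)

lemma single_not_mem (L : Finset (Finset X)) (hline : ∀ ℓ ∈ L, ℓ.card = 3)
    (h2 : ∀ v ∈ colSpace L, wtv v ≠ 2) (x : X) :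
    Pi.single x (1 : ZMod 2) ∉ colSpace L := by
  intro hmem
  have havoid : ∀ ℓ ∈ L, x ∉ ℓ := by
    intro ℓ hℓ hxℓ
    have hsplit : lineVec ℓ = Pi.single x (1 : ZMod 2) + lineVec (ℓ.erase x) := by
      rw [single_add_lineVec (Finset.notMem_erase x ℓ), Finset.insert_erase hxℓ]
    have hmem2 : Pi.single x (1 : ZMod 2) + lineVec ℓ ∈ colSpace L :=
      Submodule.add_mem _ hmem (Submodule.subset_span ⟨ℓ, hℓ, rfl⟩)
    have heq : Pi.single x (1 : ZMod 2) + lineVec ℓ = lineVec (ℓ.erase x) := by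
      rw [hsplit, ← add_assoc, addself, zero_add]
    rw [heq] at hmem2
    have h := h2 _ hmem2
    rw [wtv_lineVec, Finset.card_erase_of_mem hxℓ, hline ℓ hℓ] at h
    exact h rfl
  have hker : colSpace L ≤
      LinearMap.ker (LinearMap.proj x : (X → ZMod 2) →ₗ[ZMod 2] ZMod 2) := by
    rw [colSpace, Submodule.span_le]
    rintro v ⟨ℓ, hℓ, rfl⟩
    simp [LinearMap.mem_ker, lineVec, havoid ℓ hℓ]
  have h := hker hmem
  simp [LinearMap.mem_ker, Pi.single_apply] at h

lemma key_iff (L : Finset (Finset X)) (hline : ∀ ℓ ∈ L, ℓ.card = 3)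
    (h2 : ∀ v ∈ colSpace L, wtv v ≠ 2)
    (h3 : ∀ v ∈ colSpace L, wtv v = 3 → ∃ ℓ ∈ L, v = lineVec ℓ)
    {x y : X} (hxy : x ≠ y) :
    (∃ z : X, Pi.single x 1 + Pi.single y 1 + Pi.single z 1 ∈ colSpace L) ↔
      (∃ z : X, ({x, y, z} : Finset X) ∈ L) := by
  constructor
  · rintro ⟨z, hz⟩
    by_cases hzx : z = x
    · subst hzx
      exfalso
      have heq : (Pi.single z 1 + Pi.single y 1 + Pi.single z 1 : X → ZMod 2)
          = Pi.single y 1 := by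
        have h' : (Pi.single z 1 + Pi.single y 1 + Pi.single z 1 : X → ZMod 2)
            = Pi.single y 1 + (Pi.single z 1 + Pi.single z 1) := by abel
        rw [h', addself, add_zero]
      rw [heq] at hz
      exact single_not_mem L hline h2 y hz
    · by_cases hzy : z = y
      · subst hzy
        exfalso
        have heq : (Pi.single x 1 + Pi.single z 1 + Pi.single z 1 : X → ZMod 2)
            = Pi.single x 1 := by
          rw [add_assoc, addself, add_zero]
        rw [heq] at hz
        exact single_not_mem L hline h2 x hz
      · have hxz : x ≠ z := fun h => hzx h.symm
        have hyz : y ≠ z := fun h => hzy h.symm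
        rw [triple_eq hxy hxz hyz] at hz
        have hcard : ({x, y, z} : Finset X).card = 3 := by
          rw [Finset.card_insert_of_notMem (by simp [hxy, hxz]),
              Finset.card_insert_of_notMem (by simp [hyz]), Finset.card_singleton]
        obtain ⟨ℓ, hℓ, hv⟩ := h3 _ hz (by rw [wtv_lineVec, hcard])
        exact ⟨z, by rw [lineVec_inj hv]; exact hℓ⟩
  · rintro ⟨z, hz⟩
    have hcard := hline _ hz
    have hxz : x ≠ z := by
      rintro rfl
      have hpair : ({x, y, x} : Finset X) = {x, y} := by
        ext w; simp only [Finset.mem_insert, Finset.mem_singleton]; tauto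
      rw [hpair, Finset.card_pair hxy] at hcard
      omega
    have hyz : y ≠ z := by
      rintro rfl
      have hpair : ({x, y, y} : Finset X) = {x, y} := by
        ext w; simp only [Finset.mem_insert, Finset.mem_singleton]; tauto
      rw [hpair, Finset.card_pair hxy] at hcard
      omega
    refine ⟨z, ?_⟩
    rw [triple_eq hxy hxz hyz]
    exact Submodule.subset_span ⟨_, hz, rfl⟩

lemma line_through (L : Finset (Finset X)) (hline : ∀ ℓ ∈ L, ℓ.card = 3)
    {x y : X} (hxy : x ≠ y) :
    (∃ z, ({x, y, z} : Finset X) ∈ L) ↔ ∃ ℓ ∈ L, x ∈ ℓ ∧ y ∈ ℓ := by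
  constructor
  · rintro ⟨z, hz⟩
    exact ⟨_, hz, by simp, by simp⟩
  · rintro ⟨ℓ, hℓ, hx, hy⟩
    have hcard := hline ℓ hℓ
    have hy' : y ∈ ℓ.erase x := Finset.mem_erase.mpr ⟨hxy.symm, hy⟩
    have h1 : ((ℓ.erase x).erase y).card = 1 := by
      rw [Finset.card_erase_of_mem hy', Finset.card_erase_of_mem hx, hcard]
    obtain ⟨z, hzeq⟩ := Finset.card_eq_one.mp h1
    refine ⟨z, ?_⟩
    have hℓeq : ℓ = {x, y, z} := by
      rw [← Finset.insert_erase hx, ← Finset.insert_erase hy', hzeq]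
    rwa [← hℓeq]

lemma mkQ_eq_iff (L : Finset (Finset X)) (u w : X → ZMod 2) :
    (colSpace L).mkQ u = (colSpace L).mkQ w ↔ u + w ∈ colSpace L := by
  rw [Submodule.mkQ_apply, Submodule.mkQ_apply, Submodule.Quotient.eq, sub_eq_add_neg,
    negself]

/-- If the column space of `N` contains no weight-2 vector and its only weight-3 vectors
are the columns of `N`, then for `x ≠ y` the images of `e_x` and `e_y` in `V` differ by
the image of some `e_z` iff `{x,y,z}` is a line; consequently the Cayley graph `Γ` of `V`
is locally the collinearity graph of `(X, L)`. -/
theorem pls_cayley_locally (L : Finset (Finset X))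
    (hline : ∀ ℓ ∈ L, ℓ.card = 3)
    (hpls : ∀ ℓ₁ ∈ L, ∀ ℓ₂ ∈ L, ∀ x y : X, x ≠ y →
      x ∈ ℓ₁ → y ∈ ℓ₁ → x ∈ ℓ₂ → y ∈ ℓ₂ → ℓ₁ = ℓ₂)
    (h2 : ∀ v ∈ colSpace L, wtv v ≠ 2)
    (h3 : ∀ v ∈ colSpace L, wtv v = 3 → ∃ ℓ ∈ L, v = lineVec ℓ) :
    (∀ x y : X, x ≠ y →
      ((∃ z : X, Pi.single x 1 + Pi.single y 1 + Pi.single z 1 ∈ colSpace L) ↔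
        (∃ z : X, ({x, y, z} : Finset X) ∈ L))) ∧
    (∀ v : (X → ZMod 2) ⧸ colSpace L,
      Nonempty (((cayleyGraph L).induce ((cayleyGraph L).neighborSet v)) ≃g collGraph L)) := by
  refine ⟨fun x y hxy => key_iff L hline h2 h3 hxy, ?_⟩
  intro v
  have hne : ∀ x : X, v + (colSpace L).mkQ (Pi.single x 1) ≠ v := by
    intro x h
    have h0 : (colSpace L).mkQ (Pi.single x 1) = 0 := by
      have := h
      rwa [add_eq_left] at this
    rw [Submodule.mkQ_apply, Submodule.Quotient.mk_eq_zero] at h0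
    exact single_not_mem L hline h2 x h0
  have hadj : ∀ x : X, (cayleyGraph L).Adj v (v + (colSpace L).mkQ (Pi.single x 1)) :=
    fun x => ⟨(hne x).symm, x, rfl⟩
  let g : X → ((cayleyGraph L).neighborSet v) :=
    fun x => ⟨v + (colSpace L).mkQ (Pi.single x 1), hadj x⟩
  have hinj : Function.Injective g := by
    intro x y h
    by_contra hxy
    have h' : v + (colSpace L).mkQ (Pi.single x 1) = v + (colSpace L).mkQ (Pi.single y 1) :=
      congrArg Subtype.val h
    have h'' := add_left_cancel h'
    rw [mkQ_eq_iff] at h''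
    exact pair_not_mem L h2 hxy h''
  have hsurj : Function.Surjective g := by
    rintro ⟨u, hu⟩
    obtain ⟨-, x, hx⟩ := hu
    exact ⟨x, Subtype.ext hx.symm⟩
  have main : ∀ a b : X,
      (cayleyGraph L).Adj (v + (colSpace L).mkQ (Pi.single a 1))
        (v + (colSpace L).mkQ (Pi.single b 1)) ↔ (collGraph L).Adj a b := by
    intro a b
    constructor
    · rintro ⟨h1, z, hz⟩
      have hab : a ≠ b := by
        rintro rfl
        exact h1 rfl
      rw [add_assoc] at hz
      have hz' := add_left_cancel hz
      rw [← map_add, mkQ_eq_iff] at hz'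
      have hre : (Pi.single b 1 + (Pi.single a 1 + Pi.single z 1) : X → ZMod 2)
          = Pi.single a 1 + Pi.single b 1 + Pi.single z 1 := by
        abel
      rw [hre] at hz'
      have hl := (key_iff L hline h2 h3 hab).mp ⟨z, hz'⟩
      exact ⟨hab, (line_through L hline hab).mp hl⟩
    · rintro ⟨hab, hl⟩
      obtain ⟨z, hz⟩ := (key_iff L hline h2 h3 hab).mpr ((line_through L hline hab).mpr hl)
      refine ⟨?_, z, ?_⟩
      · intro h
        have h'' := add_left_cancel h
        rw [mkQ_eq_iff] at h''
        exact pair_not_mem L h2 hab h''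
      · rw [add_assoc]
        congr 1
        rw [← map_add, mkQ_eq_iff]
        have hre : (Pi.single b 1 + (Pi.single a 1 + Pi.single z 1) : X → ZMod 2)
            = Pi.single a 1 + Pi.single b 1 + Pi.single z 1 := by
          abel
        rw [hre]
        exact hz
  refine ⟨SimpleGraph.Iso.symm ⟨Equiv.ofBijective g ⟨hinj, hsurj⟩, ?_⟩⟩
  intro a b
  exact main a b
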